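/- Consider a PFB instance with r_j = 0 for all jobs j, due dates satisfying d_1 ≤ d_2 ≤ … ≤ d_n, and nonnegative weights w_j. Then for every feasible schedule S there exists a feasible permutation schedule Ŝ such that Σ_{j=1}^{n} w_j·U_j(Ŝ) ≤ Σ_{j=1}^{n} w_j·U_j(S) and the on-time jobs of Ŝ are scheduled in the order of their indices: for any two jobs j < j' that are both on time in Ŝ, c_{i,j}(Ŝ) ≤ c_{i,j'}(Ŝ) for every machine i. -/

import Mathlib

lemma exists_ge_of_card {N : ℕ} (Q : Finset (Fin N)) (k : ℕ) (h : k < Q.card) :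
    ∃ q ∈ Q, k ≤ (q : ℕ) := by
  by_contra hcon
  push_neg at hcon
  have hsub : Q.card ≤ (Finset.range k).card :=
    Finset.card_le_card_of_injOn (fun q => (q : ℕ))
      (fun q hq => by simpa using hcon q hq) (fun a _ b _ hab => Fin.ext hab)
  simp [Finset.card_range] at hsub; omega

lemma sorted_dom {N : ℕ} (a b : Fin N → ℕ) (q : ℕ) (h : ∀ j, a j + q ≤ b j) (k : Fin N) :
    a (Tuple.sort a k) + q ≤ b (Tuple.sort b k) := by
  set Q : Finset (Fin N) :=
    ((Finset.Iic k).image (Tuple.sort b)).image (Tuple.sort a).symm with hQ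
  have hQcard : (k : ℕ) < Q.card := by
    rw [hQ, Finset.card_image_of_injective _ (Tuple.sort a).symm.injective,
      Finset.card_image_of_injective _ (Tuple.sort b).injective, Fin.card_Iic]
    omega
  obtain ⟨l, hlQ, hkl⟩ := exists_ge_of_card Q (k : ℕ) hQcard
  rw [hQ, Finset.mem_image] at hlQ
  obtain ⟨x, hxP, hx⟩ := hlQ
  rw [Finset.mem_image] at hxP
  obtain ⟨l', hl', hx'⟩ := hxP
  have hsortal : Tuple.sort a l = x := by rw [← hx]; simp
  have h1 : a (Tuple.sort a k) ≤ a (Tuple.sort a l) :=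
    Tuple.monotone_sort a (show k ≤ l from hkl)
  have h2 : a (Tuple.sort a l) + q ≤ b (Tuple.sort b l') := by
    rw [hsortal, hx']; exact h x
  have h3 : b (Tuple.sort b l') ≤ b (Tuple.sort b k) :=
    Tuple.monotone_sort b (Finset.mem_Iic.mp hl')
  omega


/-- A PFB instance has `m+1` machines (indexed by `Fin (m+1)`, so at least one) and
`n+1` jobs (indexed by `Fin (n+1)`, so at least one). `p i` is the processing time of
machine `i`, `b i` its maximum batch size, `r j` the release date of job `j`.
A schedule `c` assigns to machine `i` and job `j` the completion time `c i j`.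
`Feasible p b r c` says: (i) each job finishes on the first machine no earlier than its
release date plus `p 0`; (ii) consecutive machines leave enough processing time;
(iii) two jobs with different completion times on a machine differ by at least the
processing time (jobs with equal completion time form one batch); (iv) at most `b i`
jobs complete at any given time on machine `i`. -/
def Feasible {m n : ℕ} (p b : Fin (m + 1) → ℕ) (r : Fin (n + 1) → ℕ)
    (c : Fin (m + 1) → Fin (n + 1) → ℕ) : Prop :=
  (∀ j, r j + p 0 ≤ c 0 j) ∧
  (∀ (i : Fin m) (j : Fin (n + 1)), c i.castSucc j + p i.succ ≤ c i.succ j) ∧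
  (∀ (i : Fin (m + 1)) (j j' : Fin (n + 1)),
      c i j ≠ c i j' → c i j + p i ≤ c i j' ∨ c i j' + p i ≤ c i j) ∧
  (∀ (i : Fin (m + 1)) (t : ℕ),
      (Finset.univ.filter (fun j => c i j = t)).card ≤ b i)

/-- `c` is a permutation schedule ordered by the permutation `σ`:
on every machine the completion times are nondecreasing along `σ`. -/
def OrderedBy {m n : ℕ} (c : Fin (m + 1) → Fin (n + 1) → ℕ)
    (σ : Equiv.Perm (Fin (n + 1))) : Prop :=
  ∀ i : Fin (m + 1), Monotone fun j => c i (σ j)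

/-- with all release dates `0`, non-decreasing due dates and nonnegative
weights, for every feasible schedule `c` there is a feasible permutation schedule
`chat` whose weighted number of late jobs is at most that of `c` and whose on-time
jobs are scheduled in the order of their indices on every machine. -/
theorem stmt16 {m n : ℕ} (p b : Fin (m + 1) → ℕ) (r : Fin (n + 1) → ℕ)
    (hp : ∀ i, 1 ≤ p i) (hb : ∀ i, 1 ≤ b i ∧ b i ≤ n + 1)
    (hr : ∀ j, r j = 0)
    (d : Fin (n + 1) → ℕ) (hd : Monotone d)
    (w : Fin (n + 1) → ℝ) (hw : ∀ j, 0 ≤ w j)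
    (c : Fin (m + 1) → Fin (n + 1) → ℕ) (hc : Feasible p b r c) :
    ∃ chat : Fin (m + 1) → Fin (n + 1) → ℕ,
      Feasible p b r chat ∧ (∃ σ : Equiv.Perm (Fin (n + 1)), OrderedBy chat σ) ∧
      (∑ j, w j * (if d j < chat (Fin.last m) j then (1 : ℝ) else 0)) ≤
        (∑ j, w j * (if d j < c (Fin.last m) j then (1 : ℝ) else 0)) ∧
      ∀ j j' : Fin (n + 1), j < j' →
        chat (Fin.last m) j ≤ d j → chat (Fin.last m) j' ≤ d j' →
        ∀ i : Fin (m + 1), chat i j ≤ chat i j' := by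
  classical
  obtain ⟨h1, h2, h3, h4⟩ := hc
  set P : ℕ := ∑ i, p i with hPdef
  set Cmax : ℕ := ∑ i, ∑ j, c i j with hCdef
  set B : ℕ := Cmax + (∑ j, d j) + P + 1 with hBdef
  have hpP : ∀ i, p i ≤ P :=
    fun i => Finset.single_le_sum (fun _ _ => Nat.zero_le _) (Finset.mem_univ i)
  have hcC : ∀ i j, c i j ≤ Cmax := fun i j =>
    le_trans (Finset.single_le_sum (f := fun j => c i j) (fun _ _ => Nat.zero_le _)
        (Finset.mem_univ j))
      (Finset.single_le_sum (f := fun i => ∑ j, c i j) (fun _ _ => Nat.zero_le _)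
        (Finset.mem_univ i))
  have hdB : ∀ j, d j < B := by
    intro j
    have := Finset.single_le_sum (f := d) (fun _ _ => Nat.zero_le _) (Finset.mem_univ j)
    omega
  set T : Finset (Fin (n + 1)) := Finset.univ.filter (fun j => c (Fin.last m) j ≤ d j)
    with hTdef
  have hk : T.card ≤ n + 1 := le_trans (Finset.card_le_univ T) (le_of_eq (by simp))
  set e : Fin T.card ≃o T := T.orderIsoOfFin rfl with hedef
  have hkc : (Tᶜ).card = n + 1 - T.card := by
    rw [Finset.card_compl]; simp
  set e' : Fin (Tᶜ).card ≃o (Tᶜ : Finset (Fin (n + 1))) := (Tᶜ).orderIsoOfFin rfl with he'def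
  set S : Fin (m + 1) → Fin (n + 1) → ℕ := fun i l => c i (Tuple.sort (c i) l) with hSdef
  have hSmono : ∀ i, Monotone (S i) := fun i => Tuple.monotone_sort (c i)
  have hSC : ∀ i l, S i l ≤ Cmax := fun i l => hcC i _
  set chat : Fin (m + 1) → Fin (n + 1) → ℕ := fun i j =>
    if hj : j ∈ T then S i (Fin.castLE hk (e.symm ⟨j, hj⟩))
    else B + (j : ℕ) * (P + 1) + (i : ℕ) * P with hchatdef
  have hchatT : ∀ i j (hj : j ∈ T),
      chat i j = S i (Fin.castLE hk (e.symm ⟨j, hj⟩)) := fun i j hj => dif_pos hj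
  have hchatnT : ∀ i j, j ∉ T →
      chat i j = B + (j : ℕ) * (P + 1) + (i : ℕ) * P := fun i j hj => dif_neg hj
  have hlow : ∀ i j, j ∈ T → chat i j ≤ Cmax := by
    intro i j hj; rw [hchatT i j hj]; exact hSC i _
  have hhigh : ∀ i j, j ∉ T → B ≤ chat i j := by
    intro i j hj; rw [hchatnT i j hj]; omega
  -- Hall argument: on-time jobs of c stay on time
  have hall : ∀ j (hj : j ∈ T), chat (Fin.last m) j ≤ d j := by
    intro j hj
    rw [hchatT _ _ hj]
    set l : Fin T.card := e.symm ⟨j, hj⟩ with hl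
    set τ := Tuple.sort (c (Fin.last m)) with hτ
    set F : Fin T.card → Fin (n + 1) := fun a => τ.symm ((e a : T) : Fin (n + 1)) with hF
    have hFinj : Function.Injective F := by
      intro a b hab
      exact e.injective (Subtype.coe_injective (τ.symm.injective hab))
    set Q : Finset (Fin (n + 1)) := (Finset.Iic l).image F with hQ
    have hQcard : (l : ℕ) < Q.card := by
      rw [hQ, Finset.card_image_of_injective _ hFinj, Fin.card_Iic]; omega
    obtain ⟨x, hxQ, hlx⟩ := exists_ge_of_card Q (l : ℕ) hQcard
    obtain ⟨a, ha, hax⟩ := Finset.mem_image.mp hxQ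
    have hmon : S (Fin.last m) (Fin.castLE hk l) ≤ S (Fin.last m) x := by
      apply hSmono
      rw [Fin.le_def]
      simpa using hlx
    have hx2 : S (Fin.last m) x = c (Fin.last m) ((e a : T) : Fin (n + 1)) := by
      rw [← hax, hSdef]
      simp [hF, hτ]
    have hmem : c (Fin.last m) ((e a : T) : Fin (n + 1)) ≤ d ((e a : T) : Fin (n + 1)) := by
      exact (Finset.mem_filter.mp (e a).2).2
    have hda : d ((e a : T) : Fin (n + 1)) ≤ d j := by
      apply hd
      have h5 : e a ≤ e l := e.monotone (Finset.mem_Iic.mp ha)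
      have h6 : (e l : T) = ⟨j, hj⟩ := by rw [hl]; simp
      calc ((e a : T) : Fin (n + 1)) ≤ ((e l : T) : Fin (n + 1)) := h5
        _ = j := by rw [h6]
    omega
  -- the ranking function g and the permutation σ
  have hgaux : ∀ (j : Fin (n + 1)) (hj : j ∉ T),
      T.card + ((e'.symm ⟨j, Finset.mem_compl.mpr hj⟩ : Fin (Tᶜ).card) : ℕ) < n + 1 := by
    intro j hj
    have := (e'.symm ⟨j, Finset.mem_compl.mpr hj⟩).isLt
    omega
  set g : Fin (n + 1) → Fin (n + 1) := fun j =>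
    if hj : j ∈ T then Fin.castLE hk (e.symm ⟨j, hj⟩)
    else ⟨T.card + (e'.symm ⟨j, Finset.mem_compl.mpr hj⟩ : ℕ), hgaux j hj⟩ with hgdef
  have hgT : ∀ j (hj : j ∈ T), (g j : ℕ) = (e.symm ⟨j, hj⟩ : ℕ) := by
    intro j hj; rw [hgdef]; simp [dif_pos hj]
  have hgTlt : ∀ j (hj : j ∈ T), (g j : ℕ) < T.card := by
    intro j hj; rw [hgT j hj]; exact (e.symm ⟨j, hj⟩).isLt
  have hgnT : ∀ j (hj : j ∉ T),
      (g j : ℕ) = T.card + (e'.symm ⟨j, Finset.mem_compl.mpr hj⟩ : ℕ) := by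
    intro j hj; rw [hgdef]; simp [dif_neg hj]
  have hginj : Function.Injective g := by
    intro a b hab
    have hv : (g a : ℕ) = (g b : ℕ) := congrArg Fin.val hab
    by_cases haT : a ∈ T <;> by_cases hbT : b ∈ T
    · rw [hgT a haT, hgT b hbT] at hv
      have := e.symm.injective (Fin.ext hv : e.symm ⟨a, haT⟩ = e.symm ⟨b, hbT⟩)
      exact congrArg Subtype.val this
    · exfalso; have := hgTlt a haT; have := hgnT b hbT; omega
    · exfalso; have := hgTlt b hbT; have := hgnT a haT; omega
    · rw [hgnT a haT, hgnT b hbT] at hv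
      have hv2 : (e'.symm ⟨a, Finset.mem_compl.mpr haT⟩ : ℕ)
          = (e'.symm ⟨b, Finset.mem_compl.mpr hbT⟩ : ℕ) := by omega
      have := e'.symm.injective (Fin.ext hv2)
      exact congrArg Subtype.val this
  have hmono : ∀ a b, g a ≤ g b → ∀ i, chat i a ≤ chat i b := by
    intro a b hab i
    have hv : (g a : ℕ) ≤ (g b : ℕ) := hab
    by_cases haT : a ∈ T <;> by_cases hbT : b ∈ T
    · rw [hchatT i a haT, hchatT i b hbT]
      apply hSmono
      rw [Fin.le_def]
      rw [hgT a haT, hgT b hbT] at hv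
      simpa using hv
    · have := hlow i a haT; have := hhigh i b hbT; omega
    · exfalso; have := hgTlt b hbT; have := hgnT a haT; omega
    · rw [hchatnT i a haT, hchatnT i b hbT]
      rw [hgnT a haT, hgnT b hbT] at hv
      have hv2 : (e'.symm ⟨a, Finset.mem_compl.mpr haT⟩ : Fin (Tᶜ).card)
          ≤ e'.symm ⟨b, Finset.mem_compl.mpr hbT⟩ := by
        rw [Fin.le_def]; omega
      have hab2 : (a : ℕ) ≤ (b : ℕ) := by
        have := e'.symm.le_iff_le.mp hv2
        exact this
      have := Nat.mul_le_mul_right (P + 1) hab2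
      omega
  have hgbij : Function.Bijective g := Finite.injective_iff_bijective.mp hginj
  set σ : Equiv.Perm (Fin (n + 1)) := (Equiv.ofBijective g hgbij).symm with hσdef
  have hgσ : ∀ l, g (σ l) = l := fun l =>
    (Equiv.ofBijective g hgbij).apply_symm_apply l
  -- feasibility (i)
  have feas1 : ∀ j, r j + p 0 ≤ chat 0 j := by
    intro j
    rw [hr j, zero_add]
    by_cases hj : j ∈ T
    · rw [hchatT 0 j hj]
      have := h1 (Tuple.sort (c 0) (Fin.castLE hk (e.symm ⟨j, hj⟩)))
      rw [hr] at this
      simpa [hSdef] using this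
    · have := hhigh 0 j hj
      have := hpP 0
      omega
  -- feasibility (ii)
  have feas2 : ∀ (i : Fin m) (j : Fin (n + 1)),
      chat i.castSucc j + p i.succ ≤ chat i.succ j := by
    intro i j
    by_cases hj : j ∈ T
    · rw [hchatT _ j hj, hchatT _ j hj]
      exact sorted_dom (c i.castSucc) (c i.succ) (p i.succ) (fun x => h2 i x) _
    · rw [hchatnT _ j hj, hchatnT _ j hj, Fin.coe_castSucc, Fin.val_succ,
        Nat.succ_mul]
      have := hpP i.succ
      omega
  -- feasibility (iii)
  have feas3 : ∀ (i : Fin (m + 1)) (j j' : Fin (n + 1)),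
      chat i j ≠ chat i j' → chat i j + p i ≤ chat i j' ∨ chat i j' + p i ≤ chat i j := by
    intro i j j' hne
    by_cases hj : j ∈ T <;> by_cases hj' : j' ∈ T
    · rw [hchatT i j hj, hchatT i j' hj'] at hne ⊢
      exact h3 i _ _ hne
    · left
      have := hlow i j hj; have := hhigh i j' hj'; have := hpP i
      omega
    · right
      have := hlow i j' hj'; have := hhigh i j hj; have := hpP i
      omega
    · rw [hchatnT i j hj, hchatnT i j' hj'] at hne ⊢
      have hvne : (j : ℕ) ≠ (j' : ℕ) := by
        intro hv; exact hne (by rw [hv])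
      have := hpP i
      rcases lt_or_gt_of_ne hvne with hlt | hlt
      · left
        have h5 : ((j : ℕ) + 1) * (P + 1) ≤ (j' : ℕ) * (P + 1) :=
          Nat.mul_le_mul_right _ hlt
        rw [Nat.succ_mul] at h5
        omega
      · right
        have h5 : ((j' : ℕ) + 1) * (P + 1) ≤ (j : ℕ) * (P + 1) :=
          Nat.mul_le_mul_right _ hlt
        rw [Nat.succ_mul] at h5
        omega
  -- feasibility (iv)
  have feas4 : ∀ (i : Fin (m + 1)) (t : ℕ),
      (Finset.univ.filter (fun j => chat i j = t)).card ≤ b i := by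
    intro i t
    by_cases ht : t ≤ Cmax
    · -- only on-time jobs can complete at t
      refine le_trans ?_ (h4 i t)
      set f : Fin (n + 1) → Fin (n + 1) := fun j =>
        if hj : j ∈ T then Tuple.sort (c i) (Fin.castLE hk (e.symm ⟨j, hj⟩)) else j with hf
      apply Finset.card_le_card_of_injOn f
      · intro j hjf
        rw [Finset.mem_coe, Finset.mem_filter] at hjf ⊢
        have hjT : j ∈ T := by
          by_contra hjn
          have := hhigh i j hjn
          have := hjf.2
          omega
        refine ⟨Finset.mem_univ _, ?_⟩
        rw [hf]
        simp only [dif_pos hjT]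
        have := hjf.2
        rw [hchatT i j hjT] at this
        simpa [hSdef] using this
      · intro a ha b hb hab
        rw [Finset.mem_coe, Finset.mem_filter] at ha hb
        have haT : a ∈ T := by
          by_contra hn; have := hhigh i a hn; have := ha.2; omega
        have hbT : b ∈ T := by
          by_contra hn; have := hhigh i b hn; have := hb.2; omega
        rw [hf] at hab
        simp only [dif_pos haT, dif_pos hbT] at hab
        have h5 := (Tuple.sort (c i)).injective hab
        have h6 : (e.symm ⟨a, haT⟩ : ℕ) = (e.symm ⟨b, hbT⟩ : ℕ) := by
          have := congrArg Fin.val h5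
          simpa using this
        have := e.symm.injective (Fin.ext h6 : e.symm ⟨a, haT⟩ = e.symm ⟨b, hbT⟩)
        exact congrArg Subtype.val this
    · -- only one (late) job can complete at t
      refine le_trans ?_ (hb i).1
      rw [Finset.card_le_one]
      intro a ha b hb2
      rw [Finset.mem_filter] at ha hb2
      have haT : a ∉ T := by
        intro hn; have := hlow i a hn; have := ha.2; omega
      have hbT : b ∉ T := by
        intro hn; have := hlow i b hn; have := hb2.2; omega
      have hva := hchatnT i a haT
      have hvb := hchatnT i b hbT
      have : (a : ℕ) * (P + 1) = (b : ℕ) * (P + 1) := by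
        have := ha.2; have := hb2.2; omega
      exact Fin.ext (Nat.eq_of_mul_eq_mul_right (Nat.succ_pos P) this)
  -- ordered by σ
  have hord : ∀ i : Fin (m + 1), Monotone fun l => chat i (σ l) := by
    intro i l l' hll'
    apply hmono
    rw [Fin.le_def]
    have ha := hgσ l
    have hb2 := hgσ l'
    calc (g (σ l) : ℕ) = (l : ℕ) := by rw [ha]
      _ ≤ (l' : ℕ) := hll'
      _ = (g (σ l') : ℕ) := by rw [hb2]
  -- cost comparison
  have hcost : (∑ j, w j * (if d j < chat (Fin.last m) j then (1 : ℝ) else 0)) ≤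
      (∑ j, w j * (if d j < c (Fin.last m) j then (1 : ℝ) else 0)) := by
    apply Finset.sum_le_sum
    intro j _
    by_cases hj : j ∈ T
    · rw [if_neg (not_lt.mpr (hall j hj)), mul_zero]
      apply mul_nonneg (hw j)
      split <;> norm_num
    · have hlate : d j < c (Fin.last m) j := by
        have : ¬ (c (Fin.last m) j ≤ d j) := by
          intro hle
          exact hj (Finset.mem_filter.mpr ⟨Finset.mem_univ _, hle⟩)
        omega
      rw [if_pos hlate, mul_one]
      apply mul_le_of_le_one_right (hw j)
      split <;> norm_num
  -- on-time jobs ordered by index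
  have hfinal : ∀ j j' : Fin (n + 1), j < j' →
      chat (Fin.last m) j ≤ d j → chat (Fin.last m) j' ≤ d j' →
      ∀ i : Fin (m + 1), chat i j ≤ chat i j' := by
    intro j j' hjj' hjd hj'd i
    have hjT : j ∈ T := by
      by_contra hn
      have := hhigh (Fin.last m) j hn
      have := hdB j
      omega
    have hj'T : j' ∈ T := by
      by_contra hn
      have := hhigh (Fin.last m) j' hn
      have := hdB j'
      omega
    rw [hchatT i j hjT, hchatT i j' hj'T]
    apply hSmono
    rw [Fin.le_def]
    have h5 : e.symm ⟨j, hjT⟩ ≤ e.symm ⟨j', hj'T⟩ :=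
      e.symm.monotone (Subtype.mk_le_mk.mpr hjj'.le)
    simpa using h5
  exact ⟨chat, ⟨feas1, feas2, feas3, feas4⟩, ⟨σ, hord⟩, hcost, hfinal⟩
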